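/- arXiv:1608.04270 — 2 statements merged into one kernel-verified Lean document; each statement's English description precedes it below -/
import Mathlib

section
/- Let U be a domain in ℝⁿ (n ≥ 2) with U ≠ ℝⁿ. Then the set of supports {p x̃ : x̃ ∈ ∂_H U} is dense in the Euclidean boundary ∂U with respect to the Euclidean metric. -/
open Set Metric Filter

noncomputable section

/-- Euclidean `n`-space. -/
abbrev Euc (n : ℕ) := EuclideanSpace ℝ (Fin n)

/-- A domain: a nonempty open connected subset of Euclidean space. -/
def IsEucDomain {n : ℕ} (U : Set (Euc n)) : Prop := IsOpen U ∧ IsConnected U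

/-- Intrinsic extended distance inside `S`: the infimum of the lengths (total
variations) of continuous paths joining `x` and `y` within `S`. -/
def intrinsicDist {n : ℕ} (S : Set (Euc n)) (x y : Euc n) : ENNReal :=
  ⨅ (γ : ℝ → Euc n) (_ : ContinuousOn γ (Icc (0:ℝ) 1)) (_ : γ 0 = x) (_ : γ 1 = y)
    (_ : MapsTo γ (Icc (0:ℝ) 1) S), eVariationOn γ (Icc (0:ℝ) 1)

/-- A Cauchy sequence (in the intrinsic metric) of points of `U` that does not
converge (in the intrinsic metric) to a point of `U`; such sequences represent
elements of the Hausdorff boundary of `U`. -/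
structure HBSeq {n : ℕ} (U : Set (Euc n)) where
  seq : ℕ → Euc n
  mem : ∀ k, seq k ∈ U
  cauchy : ∀ ε : ENNReal, 0 < ε → ∃ N : ℕ, ∀ j ≥ N, ∀ k ≥ N,
    intrinsicDist U (seq j) (seq k) < ε
  notConv : ¬ ∃ u ∈ U, Tendsto (fun k => intrinsicDist U (seq k) u) atTop (nhds 0)

/-- Two Cauchy sequences represent the same Hausdorff-boundary element iff the
intrinsic distance between corresponding terms tends to `0`. -/
def HBEquiv {n : ℕ} (U : Set (Euc n)) (s t : HBSeq U) : Prop :=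
  Tendsto (fun k => intrinsicDist U (s.seq k) (t.seq k)) atTop (nhds 0)

/-- The Hausdorff boundary of `U`: points of the completion of `(U, ρ_U)` not
corresponding to points of `U`. -/
def HausdorffBoundary {n : ℕ} (U : Set (Euc n)) : Type := Quot (HBEquiv U)

/-- The relative metric on the Hausdorff boundary (the completion metric). -/
def hbDist {n : ℕ} {U : Set (Euc n)} (a b : HausdorffBoundary U) : ENNReal :=
  limsup (fun k => intrinsicDist U ((Quot.out a).seq k) ((Quot.out b).seq k)) atTop

/-- The support of a Hausdorff-boundary element: the Euclidean limit of a
representing Cauchy sequence. -/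
def hbSupport {n : ℕ} {U : Set (Euc n)} (a : HausdorffBoundary U) : Euc n :=
  limUnder atTop (Quot.out a).seq

/-- A (bijective) isometry of Hausdorff boundaries in the relative metrics. -/
def IsHBIsometry {n : ℕ} {U V : Set (Euc n)}
    (f : HausdorffBoundary U → HausdorffBoundary V) : Prop :=
  Function.Bijective f ∧ ∀ a b : HausdorffBoundary U, hbDist (f a) (f b) = hbDist a b

/-- `U` is uniquely determined in the class `𝒰` by the relative metric of its
Hausdorff boundary: any member of `𝒰` with Hausdorff boundary isometric (in the
relative metrics) to that of `U` is the image of `U` under a Euclidean isometry. -/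
def UniquelyDeterminedIn {n : ℕ} (𝒰 : Set (Set (Euc n))) (U : Set (Euc n)) : Prop :=
  ∀ V ∈ 𝒰, (∃ f : HausdorffBoundary U → HausdorffBoundary V, IsHBIsometry f) →
    ∃ J : Euc n ≃ᵢ Euc n, J '' U = V

lemma edist_le_intrinsicDist {n : ℕ} (S : Set (Euc n)) (x y : Euc n) :
    edist x y ≤ intrinsicDist S x y := by
  refine le_iInf fun γ => le_iInf fun hc => le_iInf fun h0 => le_iInf fun h1 =>
    le_iInf fun hm => ?_
  have := eVariationOn.edist_le γ (s := Icc (0:ℝ) 1) (x := (0:ℝ)) (y := (1:ℝ))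
    (left_mem_Icc.2 zero_le_one) (right_mem_Icc.2 zero_le_one)
  rwa [h0, h1] at this

lemma intrinsicDist_le_of_segment {n : ℕ} {S : Set (Euc n)} {a b : Euc n}
    (h : segment ℝ a b ⊆ S) : intrinsicDist S a b ≤ edist a b := by
  set γ : ℝ → Euc n := fun t => a + t • (b - a) with hγ
  have hcont : ContinuousOn γ (Icc (0:ℝ) 1) := by fun_prop
  have h0 : γ 0 = a := by simp [hγ]
  have h1 : γ 1 = b := by simp [hγ]
  have hmap : MapsTo γ (Icc (0:ℝ) 1) S := fun t ht => h (by
    rw [segment_eq_image']; exact ⟨t, ht, rfl⟩)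
  have hlip : LipschitzWith ‖b - a‖₊ γ := by
    intro s t
    have hst : γ s - γ t = (s - t) • (b - a) := by simp only [hγ]; module
    rw [edist_nndist, nndist_eq_nnnorm, edist_nndist, nndist_eq_nnnorm, hst, nnnorm_smul,
      ← ENNReal.coe_mul, mul_comm]
  have hvar : eVariationOn γ (Icc (0:ℝ) 1) ≤ ‖b - a‖₊ * eVariationOn (id : ℝ → ℝ) (Icc 0 1) :=
    hlip.lipschitzOnWith.comp_eVariationOn_le (mapsTo_id _)
  have hid : eVariationOn (id : ℝ → ℝ) (Icc 0 1) ≤ 1 := by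
    have := (monotoneOn_id (s := Icc (0:ℝ) 1)).eVariationOn_le
      (left_mem_Icc.2 zero_le_one) (right_mem_Icc.2 zero_le_one)
    simpa using this
  calc intrinsicDist S a b ≤ eVariationOn γ (Icc (0:ℝ) 1) :=
        iInf_le_of_le γ (iInf_le_of_le hcont (iInf_le_of_le h0 (iInf_le_of_le h1
          (iInf_le _ hmap))))
    _ ≤ ‖b - a‖₊ * 1 := hvar.trans (mul_le_mul_right hid _)
    _ = edist a b := by rw [mul_one, edist_comm, edist_nndist, nndist_eq_nnnorm]

lemma tendsto_congr_of_edist_zero {E : Type*} [PseudoEMetricSpace E] {f g : ℕ → E} {L : E}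
    (h : Tendsto (fun k => edist (f k) (g k)) atTop (nhds 0))
    (hg : Tendsto g atTop (nhds L)) : Tendsto f atTop (nhds L) := by
  rw [tendsto_iff_edist_tendsto_0] at hg ⊢
  have hsum : Tendsto (fun k => edist (f k) (g k) + edist (g k) L) atTop (nhds 0) := by
    simpa using h.add hg
  exact tendsto_of_tendsto_of_tendsto_of_le_of_le tendsto_const_nhds hsum
    (fun k => zero_le) (fun k => edist_triangle _ _ _)

lemma hbequiv_edist_tendsto {n : ℕ} {U : Set (Euc n)} {s t : HBSeq U} (h : HBEquiv U s t) :
    Tendsto (fun k => edist (s.seq k) (t.seq k)) atTop (nhds 0) :=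
  tendsto_of_tendsto_of_tendsto_of_le_of_le tendsto_const_nhds h (fun _ => zero_le)
    (fun k => edist_le_intrinsicDist U _ _)

lemma eqvgen_tendsto_iff {n : ℕ} {U : Set (Euc n)} {s t : HBSeq U}
    (h : Relation.EqvGen (HBEquiv U) s t) (L : Euc n) :
    Tendsto s.seq atTop (nhds L) ↔ Tendsto t.seq atTop (nhds L) := by
  induction h with
  | rel a b hab =>
    have hd := hbequiv_edist_tendsto hab
    have hd' : Tendsto (fun k => edist (b.seq k) (a.seq k)) atTop (nhds 0) := by
      simpa [edist_comm] using hd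
    exact ⟨fun hs => tendsto_congr_of_edist_zero hd' hs,
      fun ht => tendsto_congr_of_edist_zero hd ht⟩
  | refl a => exact Iff.rfl
  | symm a b _ ih => exact ih.symm
  | trans a b c _ _ ih1 ih2 => exact ih1.trans ih2

/-- Lemma 2.1: the supports of Hausdorff-boundary elements are dense in the
Euclidean boundary of `U`. -/
theorem supports_dense_in_frontier
    (n : ℕ) (hn : 2 ≤ n) (U : Set (Euc n)) (hU : IsEucDomain U) (hne : U ≠ univ) :
    frontier U ⊆ closure (range (fun a : HausdorffBoundary U => hbSupport a)) := by
  intro x hx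
  rw [Metric.mem_closure_iff]
  intro ε hε
  have hUopen : IsOpen U := hU.1
  have hxU : x ∉ U := by
    intro hxmem
    exact hx.2 (by rwa [hUopen.interior_eq])
  have hxcl : x ∈ closure U := hx.1
  obtain ⟨y, hyU, hxy⟩ := Metric.mem_closure_iff.1 hxcl ε hε
  -- the segment from y towards x
  set pt : ℝ → Euc n := fun t => y + t • (x - y) with hpt
  have hptc : Continuous pt := by fun_prop
  set S' : Set ℝ := Icc (0:ℝ) 1 ∩ pt ⁻¹' Uᶜ with hS'
  have hS'closed : IsClosed S' := isClosed_Icc.inter (hUopen.isClosed_compl.preimage hptc)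
  have hS'ne : S'.Nonempty := ⟨1, right_mem_Icc.2 zero_le_one, by simp [hpt, hxU]⟩
  have hS'bdd : BddBelow S' := ⟨0, fun t ht => ht.1.1⟩
  set t₀ : ℝ := sInf S' with ht₀
  have ht₀mem : t₀ ∈ S' := hS'closed.csInf_mem hS'ne hS'bdd
  have ht₀Icc : t₀ ∈ Icc (0:ℝ) 1 := ht₀mem.1
  have hzU : pt t₀ ∉ U := ht₀mem.2
  have ht₀pos : 0 < t₀ := by
    rcases lt_or_eq_of_le ht₀Icc.1 with h | h
    · exact h
    · exfalso; apply hzU; rw [← h]; simpa [hpt] using hyU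
  have hmemU : ∀ t : ℝ, 0 ≤ t → t < t₀ → pt t ∈ U := by
    intro t ht0 htlt
    by_contra hnot
    have : t ∈ S' := ⟨⟨ht0, htlt.le.trans ht₀Icc.2⟩, hnot⟩
    exact absurd (csInf_le hS'bdd this) (not_le.2 htlt)
  -- segments between points strictly before t₀ stay in U
  have hseg : ∀ s t : ℝ, 0 ≤ s → s < t₀ → 0 ≤ t → t < t₀ →
      segment ℝ (pt s) (pt t) ⊆ U := by
    intro s t hs0 hs1 ht0 ht1 w hw
    rw [segment_eq_image'] at hw
    obtain ⟨θ, hθ, rfl⟩ := hw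
    have hkey : pt s + θ • (pt t - pt s) = pt (s + θ * (t - s)) := by
      simp only [hpt]; module
    show pt s + θ • (pt t - pt s) ∈ U
    rw [hkey]
    apply hmemU
    · nlinarith [hθ.1, hθ.2]
    · have hc : (1 - θ) • s + θ • t ∈ Iio t₀ :=
        (convex_Iio (t₀ : ℝ)) hs1 ht1 (by linarith [hθ.2]) hθ.1 (by ring)
      have heq : s + θ * (t - s) = (1 - θ) • s + θ • t := by
        simp only [smul_eq_mul]; ring
      rw [heq]; exact hc
  -- the sequence
  set tk : ℕ → ℝ := fun k => t₀ - t₀ / (k + 1) with htk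
  have htk0 : ∀ k, 0 ≤ tk k := by
    intro k
    have : t₀ / (k + 1) ≤ t₀ := by
      apply div_le_self ht₀pos.le
      have : (0:ℝ) ≤ (k:ℝ) := Nat.cast_nonneg k
      linarith
    simp only [htk]; linarith
  have htklt : ∀ k, tk k < t₀ := by
    intro k
    have : 0 < t₀ / (k + 1) := by positivity
    simp only [htk]; linarith
  have htktend : Tendsto tk atTop (nhds t₀) := by
    have h1 : Tendsto (fun k : ℕ => t₀ / (k + 1)) atTop (nhds 0) := by
      have := tendsto_one_div_add_atTop_nhds_zero_nat.const_mul t₀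
      simpa [div_eq_mul_inv, mul_comm] using this
    have h2 : Tendsto (fun _ : ℕ => t₀) atTop (nhds t₀) := tendsto_const_nhds
    simpa using h2.sub h1
  set sq : ℕ → Euc n := fun k => pt (tk k) with hsq
  have hsqmem : ∀ k, sq k ∈ U := fun k => hmemU _ (htk0 k) (htklt k)
  have hsqtend : Tendsto sq atTop (nhds (pt t₀)) := (hptc.tendsto t₀).comp htktend
  have hsqcauchy : CauchySeq sq := hsqtend.cauchySeq
  rw [EMetric.cauchySeq_iff] at hsqcauchy
  have hbound : ∀ j k, intrinsicDist U (sq j) (sq k) ≤ edist (sq j) (sq k) := by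
    intro j k
    exact intrinsicDist_le_of_segment (hseg _ _ (htk0 j) (htklt j) (htk0 k) (htklt k))
  set s : HBSeq U :=
    { seq := sq
      mem := hsqmem
      cauchy := by
        intro ε' hε'
        obtain ⟨N, hN⟩ := hsqcauchy ε' hε'
        exact ⟨N, fun j hj k hk => lt_of_le_of_lt (hbound j k) (hN j hj k hk)⟩
      notConv := by
        rintro ⟨u, huU, htend⟩
        have hed : Tendsto (fun k => edist (sq k) u) atTop (nhds 0) :=
          tendsto_of_tendsto_of_tendsto_of_le_of_le tendsto_const_nhds htend
            (fun _ => zero_le) (fun k => edist_le_intrinsicDist U _ _)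
        have : Tendsto sq atTop (nhds u) := by
          rw [tendsto_iff_edist_tendsto_0]; exact hed
        have huz : u = pt t₀ := tendsto_nhds_unique this hsqtend
        exact hzU (huz ▸ huU) } with hs
  set a : HausdorffBoundary U := Quot.mk _ s with ha
  have hout : Relation.EqvGen (HBEquiv U) (Quot.out a) s := by
    apply Quot.eqvGen_exact
    rw [Quot.out_eq]
  have houttend : Tendsto (Quot.out a).seq atTop (nhds (pt t₀)) := by
    rw [eqvgen_tendsto_iff hout]
    exact hsqtend
  have hsup : hbSupport a = pt t₀ := houttend.limUnder_eq
  refine ⟨pt t₀, ⟨a, hsup⟩, ?_⟩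
  have hxz : x - pt t₀ = (1 - t₀) • (x - y) := by simp only [hpt]; module
  have : dist x (pt t₀) = |1 - t₀| * ‖x - y‖ := by
    rw [dist_eq_norm, hxz, norm_smul, Real.norm_eq_abs]
  rw [this]
  have h1 : |1 - t₀| ≤ 1 := by
    rw [abs_le]; constructor <;> [linarith [ht₀Icc.2]; linarith [ht₀pos]]
  calc |1 - t₀| * ‖x - y‖ ≤ 1 * ‖x - y‖ := by
        apply mul_le_mul_of_nonneg_right h1 (norm_nonneg _)
    _ = dist x y := by rw [one_mul, dist_eq_norm]
    _ < ε := hxy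
end
end

section
/- Let Y ⊆ ℝⁿ (n ≥ 2) be an n-dimensional compact connected topological (C⁰) manifold with nonempty boundary, embedded in ℝⁿ (so Int Y is open in ℝⁿ), satisfying condition (i), and assume the function ρ_Y is a metric on Y. Then any two points x, y ∈ Y can be joined in Y by a shortest curve in the metric ρ_Y: there exists a continuous curve γ : [0,L] → Y with L = ρ_Y(x,y), γ(0) = x, γ(L) = y, and ρ_Y(γ(s), γ(t)) = t − s for all s, t ∈ [0,L] with s < t. -/
open Set Metric Filter

noncomputable section

/-- The closed half-space `{v : x₀(v) ≥ 0}` in Euclidean `n`-space. -/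
def closedHalfSpace (n : ℕ) (hn : 0 < n) : Set (Euc n) := {v | 0 ≤ v ⟨0, hn⟩}

/-- The manifold interior of `Y ⊆ ℝⁿ`: points having a neighborhood in `Y`
homeomorphic to an open subset of `ℝⁿ`. -/
def mInterior (n : ℕ) (Y : Set (Euc n)) : Set (Euc n) :=
  {x | x ∈ Y ∧ ∃ N : Set (Euc n), N ∈ nhdsWithin x Y ∧ N ⊆ Y ∧
    ∃ O : Set (Euc n), IsOpen O ∧ Nonempty (↥N ≃ₜ ↥O)}

/-- `Y ⊆ ℝⁿ` is a topological (`C⁰`) `n`-manifold with boundary: every point has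
a neighborhood in `Y` homeomorphic to an open subset of the closed half-space. -/
def IsC0ManifoldWithBoundary (n : ℕ) (hn : 0 < n) (Y : Set (Euc n)) : Prop :=
  ∀ x ∈ Y, ∃ N : Set (Euc n), N ∈ nhdsWithin x Y ∧ N ⊆ Y ∧
    ∃ O : Set (Euc n), (∃ O' : Set (Euc n), IsOpen O' ∧ O = O' ∩ closedHalfSpace n hn) ∧
      Nonempty (↥N ≃ₜ ↥O)

/-- `ρ_Y(x,y)`: the liminf, over `x' → x`, `y' → y` with `x', y'` in the manifold
interior of `Y`, of the infimum of lengths of paths joining `x'` and `y'` within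
the manifold interior of `Y`. -/
def rhoY (n : ℕ) (Y : Set (Euc n)) (x y : Euc n) : ENNReal :=
  liminf (fun p : Euc n × Euc n => intrinsicDist (mInterior n Y) p.1 p.2)
    ((nhdsWithin x (mInterior n Y)) ×ˢ (nhdsWithin y (mInterior n Y)))

namespace RhoAux

variable {n : ℕ}

/-- Constant-speed parametrization of the segment from `v` to `w`, clamped. -/
def segMap (v w : Euc n) (t : ℝ) : Euc n :=
  v + ((min (max t 0) (dist v w)) / dist v w) • (w - v)

lemma segMap_zero (v w : Euc n) : segMap v w 0 = v := by
  simp [segMap, min_eq_left dist_nonneg]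

lemma segMap_of_ge (v w : Euc n) {t : ℝ} (ht : dist v w ≤ t) : segMap v w t = w := by
  rcases eq_or_lt_of_le (dist_nonneg : (0:ℝ) ≤ dist v w) with h | h
  · have hvw : v = w := dist_eq_zero.1 h.symm
    simp [segMap, hvw]
  · have h0 : (0:ℝ) ≤ t := le_trans h.le ht
    have : max t 0 = t := max_eq_left h0
    rw [segMap, this, min_eq_right ht, div_self h.ne']
    simp

lemma segMap_dist (v w : Euc n) (a b : ℝ) :
    dist (segMap v w a) (segMap v w b) ≤ |a - b| := by
  rcases eq_or_lt_of_le (dist_nonneg : (0:ℝ) ≤ dist v w) with h | h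
  · have hvw : v = w := dist_eq_zero.1 h.symm
    simp [segMap, hvw]
  · have hclip : LipschitzWith 1 (fun t : ℝ => min (max t 0) (dist v w)) :=
      (LipschitzWith.id.max_const 0).min_const _
    have hc := hclip.dist_le_mul a b
    simp only [NNReal.coe_one, one_mul] at hc
    rw [segMap, segMap, dist_add_left, dist_eq_norm, ← sub_smul, norm_smul, Real.norm_eq_abs, ← sub_div,
      abs_div, abs_of_pos h]
    have hnorm : ‖w - v‖ = dist v w := by rw [← dist_eq_norm, dist_comm]
    rw [hnorm, div_mul_cancel₀ _ h.ne']
    rw [Real.dist_eq] at hc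
    calc |(a ⊔ 0) ⊓ dist v w - (b ⊔ 0) ⊓ dist v w| ≤ |a - b| := hc

lemma segMap_mem (v w : Euc n) (t : ℝ) : segMap v w t ∈ segment ℝ v w := by
  rw [segment_eq_image']
  refine ⟨(min (max t 0) (dist v w)) / dist v w, ?_, rfl⟩
  rcases eq_or_lt_of_le (dist_nonneg : (0:ℝ) ≤ dist v w) with h | h
  · simp [← h]
  · constructor
    · positivity
    · rw [div_le_one h]
      exact min_le_right _ _
  
/-- Concatenate the constant-speed segment paths through `v 0, v 1, …, v m`. -/
lemma chain (S : Set (Euc n)) (v : ℕ → Euc n) (hv0 : v 0 ∈ S)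
    (hseg : ∀ i, segment ℝ (v i) (v (i + 1)) ⊆ S) (m : ℕ) :
    ∃ h : ℝ → Euc n, (∀ s t : ℝ, s ≤ t → dist (h s) (h t) ≤ t - s) ∧ h 0 = v 0 ∧
      (∀ t : ℝ, (∑ i ∈ Finset.range m, dist (v i) (v (i + 1))) ≤ t → h t = v m) ∧
      (∀ t, h t ∈ S) := by
  induction m with
  | zero =>
    exact ⟨fun _ => v 0, fun s t hst => by simpa using sub_nonneg.2 hst, rfl,
      fun t _ => rfl, fun _ => hv0⟩
  | succ m ih =>
    obtain ⟨h, hlip, h0, hend, hmem⟩ := ih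
    set Sm := ∑ i ∈ Finset.range m, dist (v i) (v (i + 1)) with hSm
    have hS_nonneg : 0 ≤ Sm := Finset.sum_nonneg fun _ _ => dist_nonneg
    have hendSm : h Sm = v m := hend Sm le_rfl
    refine ⟨fun t => if t ≤ Sm then h t else segMap (v m) (v (m + 1)) (t - Sm),
      ?_, ?_, ?_, ?_⟩
    · intro s t hst
      by_cases hs : s ≤ Sm
      · by_cases ht : t ≤ Sm
        · simp only [if_pos hs, if_pos ht]
          exact hlip s t hst
        · push_neg at ht
          simp only [if_pos hs, if_neg (not_le.2 ht)]
          calc dist (h s) (segMap (v m) (v (m + 1)) (t - Sm))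
              ≤ dist (h s) (h Sm) + dist (h Sm) (segMap (v m) (v (m + 1)) (t - Sm)) :=
                dist_triangle _ _ _
            _ ≤ (Sm - s) + (t - Sm) := by
                refine add_le_add (hlip s Sm hs) ?_
                rw [hendSm]
                have h2 := segMap_dist (v m) (v (m+1)) 0 (t - Sm)
                rw [segMap_zero] at h2
                calc dist (v m) (segMap (v m) (v (m + 1)) (t - Sm))
                    ≤ |0 - (t - Sm)| := h2
                  _ = t - Sm := by rw [zero_sub, abs_neg, abs_of_nonneg (by linarith)]
            _ = t - s := by ring
      · push_neg at hs
        have ht : ¬ t ≤ Sm := not_le.2 (lt_of_lt_of_le hs hst)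
        simp only [if_neg (not_le.2 hs), if_neg ht]
        calc dist (segMap (v m) (v (m + 1)) (s - Sm)) (segMap (v m) (v (m + 1)) (t - Sm))
            ≤ |(s - Sm) - (t - Sm)| := segMap_dist _ _ _ _
          _ = t - s := by rw [show (s - Sm) - (t - Sm) = -(t - s) by ring, abs_neg,
              abs_of_nonneg (by linarith)]
    · simp only [if_pos hS_nonneg, h0]
    · intro t hSt
      rw [Finset.sum_range_succ, ← hSm] at hSt
      by_cases htt : t ≤ Sm
      · have hd0 : dist (v m) (v (m + 1)) = 0 := by
          have := dist_nonneg (x := v m) (y := v (m + 1)); linarith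
        have hvv : v m = v (m + 1) := dist_eq_zero.1 hd0
        simp only [if_pos htt]
        rw [hend t (by linarith), hvv]
      · simp only [if_neg htt]
        exact segMap_of_ge _ _ (by linarith)
    · intro t
      by_cases htt : t ≤ Sm
      · simp only [if_pos htt]; exact hmem t
      · simp only [if_neg htt]
        exact hseg m (segMap_mem _ _ _)

/-- A Lipschitz-type bound gives a bound on the variation over `[0,1]`. -/
lemma evar_le_of_dist {f : ℝ → Euc n} {C : ℝ} (hC : 0 ≤ C)
    (h : ∀ u v : ℝ, u ∈ Icc (0:ℝ) 1 → v ∈ Icc (0:ℝ) 1 → u ≤ v →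
      dist (f u) (f v) ≤ C * (v - u)) :
    eVariationOn f (Icc (0:ℝ) 1) ≤ ENNReal.ofReal C := by
  unfold eVariationOn
  refine iSup_le ?_
  rintro ⟨m, u, hu, us⟩
  calc ∑ i ∈ Finset.range m, edist (f (u (i + 1))) (f (u i))
      ≤ ∑ i ∈ Finset.range m, ENNReal.ofReal (C * (u (i + 1) - u i)) := by
        refine Finset.sum_le_sum fun i _ => ?_
        rw [edist_dist, dist_comm]
        exact ENNReal.ofReal_le_ofReal (h _ _ (us i) (us (i + 1)) (hu (Nat.le_succ i)))
    _ = ENNReal.ofReal (∑ i ∈ Finset.range m, C * (u (i + 1) - u i)) := by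
        rw [ENNReal.ofReal_sum_of_nonneg]
        intro i _
        exact mul_nonneg hC (sub_nonneg.2 (hu (Nat.le_succ i)))
    _ = ENNReal.ofReal (C * (u m - u 0)) := by
        rw [← Finset.mul_sum, Finset.sum_range_sub (fun i => u i)]
    _ ≤ ENNReal.ofReal (C * 1) := by
        refine ENNReal.ofReal_le_ofReal ?_
        have h1 : u m ≤ 1 := (us m).2
        have h2 : 0 ≤ u 0 := (us 0).1
        nlinarith
    _ = ENNReal.ofReal C := by rw [mul_one]

lemma intrinsic_le {S : Set (Euc n)} {x y : Euc n} {g : ℝ → Euc n}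
    (hc : ContinuousOn g (Icc (0:ℝ) 1)) (h0 : g 0 = x) (h1 : g 1 = y)
    (hm : MapsTo g (Icc (0:ℝ) 1) S) :
    intrinsicDist S x y ≤ eVariationOn g (Icc (0:ℝ) 1) := by
  unfold intrinsicDist
  exact iInf_le_of_le g <| iInf_le_of_le hc <| iInf_le_of_le h0 <|
    iInf_le_of_le h1 <| iInf_le_of_le hm le_rfl

lemma lip_of_dist {f : ℝ → Euc n} {C : ℝ} (hC : 0 ≤ C)
    (h : ∀ s t : ℝ, s ≤ t → dist (f s) (f t) ≤ C * (t - s)) :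
    LipschitzWith C.toNNReal f := by
  refine LipschitzWith.of_dist_le_mul fun s t => ?_
  rw [Real.coe_toNNReal C hC]
  rcases le_total s t with hst | hst
  · calc dist (f s) (f t) ≤ C * (t - s) := h s t hst
      _ = C * dist s t := by rw [Real.dist_eq, abs_of_nonpos (by linarith), neg_sub]
  · calc dist (f s) (f t) = dist (f t) (f s) := dist_comm _ _
      _ ≤ C * (s - t) := h t s hst
      _ = C * dist s t := by rw [Real.dist_eq, abs_of_nonneg (by linarith)]

/-- Lower semicontinuity of `rhoY` along interior sequences with controlled
intrinsic distances. -/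
lemma rhoY_le_of_tendsto {Y : Set (Euc n)} {F : Filter ℕ} [F.NeBot]
    {P Q : ℕ → Euc n} {p q : Euc n} {c : ENNReal}
    (hPm : ∀ k, P k ∈ mInterior n Y) (hQm : ∀ k, Q k ∈ mInterior n Y)
    (hP : Tendsto P F (nhds p)) (hQ : Tendsto Q F (nhds q))
    (hle : ∀ᶠ k in F, intrinsicDist (mInterior n Y) (P k) (Q k) ≤ c) :
    rhoY n Y p q ≤ c := by
  unfold rhoY
  refine Filter.liminf_le_of_frequently_le' ?_
  rw [Filter.frequently_iff]
  intro T hT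
  obtain ⟨U, hU, V, hV, hUV⟩ := Filter.mem_prod_iff.mp hT
  rw [mem_nhdsWithin] at hU hV
  obtain ⟨U', hU'o, hpU', hU'⟩ := hU
  obtain ⟨V', hV'o, hqV', hV'⟩ := hV
  have h1 : ∀ᶠ k in F, P k ∈ U' := hP (hU'o.mem_nhds hpU')
  have h2 : ∀ᶠ k in F, Q k ∈ V' := hQ (hV'o.mem_nhds hqV')
  obtain ⟨k, hk1, hk2, hk3⟩ := (h1.and (h2.and hle)).exists
  exact ⟨(P k, Q k), hUV ⟨hU' ⟨hk1, hPm k⟩, hV' ⟨hk2, hQm k⟩⟩, hk3⟩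

/-- Existence of interior near-optimal constant-speed-type paths. -/
lemma exists_path {Y : Set (Euc n)} (hopen : IsOpen (mInterior n Y)) {x y : Euc n}
    {L : ℝ} (hL : 0 < L) (hrho : rhoY n Y x y = ENNReal.ofReal L) (k : ℕ) :
    ∃ f : ℝ → Euc n, (∀ t, f t ∈ mInterior n Y) ∧
      dist (f 0) x < 1 / ((k : ℝ) + 1) ∧ dist (f L) y < 1 / ((k : ℝ) + 1) ∧
      (∀ s t : ℝ, s ≤ t → dist (f s) (f t) ≤ ((L + 1 / ((k : ℝ) + 1)) / L) * (t - s)) := by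
  set ε : ℝ := 1 / ((k : ℝ) + 1) with hεdef
  have hε : 0 < ε := by positivity
  have h1 : rhoY n Y x y < ENNReal.ofReal L + ENNReal.ofReal ε := by
    rw [hrho]
    exact ENNReal.lt_add_right ENNReal.ofReal_ne_top (ENNReal.ofReal_pos.2 hε).ne'
  unfold rhoY at h1
  have h2 := Filter.frequently_lt_of_liminf_lt (h := h1)
  have hT : ((mInterior n Y ∩ ball x ε) ×ˢ (mInterior n Y ∩ ball y ε)) ∈
      (nhdsWithin x (mInterior n Y)) ×ˢ (nhdsWithin y (mInterior n Y)) :=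
    Filter.prod_mem_prod (inter_mem_nhdsWithin _ (ball_mem_nhds _ hε))
      (inter_mem_nhdsWithin _ (ball_mem_nhds _ hε))
  obtain ⟨⟨p, q⟩, hlt, hpmem, hqmem⟩ :=
    (h2.and_eventually (Filter.eventually_of_mem hT fun z hz => hz)).exists
  simp only [intrinsicDist, iInf_lt_iff] at hlt
  obtain ⟨σ, hσc, hσ0, hσ1, hσm, hσvar⟩ := hlt
  have hp_int : p ∈ mInterior n Y := hpmem.1
  have hKc : IsCompact (σ '' Icc (0:ℝ) 1) := isCompact_Icc.image_of_continuousOn hσc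
  have hKS : σ '' Icc (0:ℝ) 1 ⊆ mInterior n Y := hσm.image_subset
  obtain ⟨r, hr, hrsub⟩ := hKc.exists_thickening_subset_open hopen hKS
  have huc := isCompact_Icc.uniformContinuousOn_of_continuous hσc
  rw [Metric.uniformContinuousOn_iff] at huc
  obtain ⟨δ, hδ, hδ'⟩ := huc r hr
  obtain ⟨m0, hm0⟩ := exists_nat_one_div_lt hδ
  set M : ℕ := m0 + 1 with hMdef
  have hM : (0:ℝ) < M := by positivity
  have hMδ : 1 / (M:ℝ) < δ := by rw [hMdef]; push_cast; exact hm0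
  set u : ℕ → ℝ := fun i => min ((i : ℝ) / M) 1 with hudef
  have humono : Monotone u := fun i j hij => min_le_min (by gcongr) le_rfl
  have hu01 : ∀ i, u i ∈ Icc (0:ℝ) 1 := fun i =>
    ⟨le_min (by positivity) zero_le_one, min_le_right _ _⟩
  set v : ℕ → Euc n := fun i => σ (u i) with hvdef
  have hustep : ∀ i, dist (u i) (u (i + 1)) < δ := by
    intro i
    have hclip : LipschitzWith 1 (fun t : ℝ => min t 1) := LipschitzWith.id.min_const 1
    have h4 := hclip.dist_le_mul ((i : ℝ) / M) ((((i : ℕ) + 1 : ℕ) : ℝ) / M)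
    simp only [NNReal.coe_one, one_mul] at h4
    have h5 : dist ((i : ℝ) / M) ((((i : ℕ) + 1 : ℕ) : ℝ) / M) = 1 / M := by
      rw [Real.dist_eq, abs_sub_comm, ← sub_div, Nat.cast_add, Nat.cast_one,
        add_sub_cancel_left, abs_of_nonneg (by positivity)]
    calc dist (u i) (u (i + 1)) ≤ dist ((i : ℝ) / M) ((((i : ℕ) + 1 : ℕ) : ℝ) / M) := h4
      _ = 1 / M := h5
      _ < δ := hMδ
  have hvseg : ∀ i, segment ℝ (v i) (v (i + 1)) ⊆ mInterior n Y := by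
    intro i
    have hdv : dist (v i) (v (i + 1)) < r :=
      hδ' (u i) (hu01 i) (u (i + 1)) (hu01 (i + 1)) (hustep i)
    have hball : segment ℝ (v i) (v (i + 1)) ⊆ ball (v i) r :=
      (convex_ball (v i) r).segment_subset (mem_ball_self hr)
        (by rw [mem_ball, dist_comm]; exact hdv)
    exact hball.trans ((ball_subset_thickening (mem_image_of_mem σ (hu01 i)) r).trans hrsub)
  set Sm := ∑ i ∈ Finset.range M, dist (v i) (v (i + 1)) with hSmdef
  have hSm_nonneg : 0 ≤ Sm := Finset.sum_nonneg fun _ _ => dist_nonneg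
  have hSm_lt : Sm < L + ε := by
    have hsum : ENNReal.ofReal Sm ≤ eVariationOn σ (Icc (0:ℝ) 1) := by
      have h3 := eVariationOn.sum_le (f := σ) (n := M) humono (fun i => hu01 i)
      calc ENNReal.ofReal Sm = ∑ i ∈ Finset.range M, edist (σ (u (i + 1))) (σ (u i)) := by
            rw [hSmdef, ENNReal.ofReal_sum_of_nonneg (fun _ _ => dist_nonneg)]
            exact Finset.sum_congr rfl fun i _ => by rw [edist_dist, dist_comm]
        _ ≤ _ := h3
    have h6 := lt_of_le_of_lt hsum hσvar
    rw [← ENNReal.ofReal_add hL.le hε.le] at h6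
    exact (ENNReal.ofReal_lt_ofReal_iff_of_nonneg hSm_nonneg).1 h6
  have hu0 : u 0 = 0 := by simp [hudef]
  have hv0p : v 0 = p := by rw [hvdef]; simp only [hu0]; exact hσ0
  have hv0 : v 0 ∈ mInterior n Y := by rw [hv0p]; exact hp_int
  obtain ⟨h, hlip, h0, hend, hmemS⟩ := chain (mInterior n Y) v hv0 hvseg M
  have huM : u M = 1 := by
    rw [hudef]; simp only [div_self hM.ne']; exact min_self 1
  have hvM : v M = q := by rw [hvdef]; simp only [huM]; exact hσ1
  refine ⟨fun t => h (t * (Sm / L)), fun t => hmemS _, ?_, ?_, ?_⟩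
  · beta_reduce
    rw [show (0:ℝ) * (Sm / L) = 0 by ring, h0, hv0p]
    exact mem_ball.1 hpmem.2
  · beta_reduce
    rw [show L * (Sm / L) = Sm by field_simp, hend Sm le_rfl, hvM]
    exact mem_ball.1 hqmem.2
  · intro s t hst
    beta_reduce
    have hc : 0 ≤ Sm / L := div_nonneg hSm_nonneg hL.le
    calc dist (h (s * (Sm / L))) (h (t * (Sm / L))) ≤ t * (Sm / L) - s * (Sm / L) :=
          hlip _ _ (mul_le_mul_of_nonneg_right hst hc)
      _ = (Sm / L) * (t - s) := by ring
      _ ≤ ((L + ε) / L) * (t - s) := by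
          refine mul_le_mul_of_nonneg_right ?_ (by linarith)
          gcongr

end RhoAux

open RhoAux in
/-- Theorem 3.3 (Euclidean case): if `ρ_Y` is a (finite) metric on a compact
connected `C⁰` `n`-manifold with nonempty boundary `Y ⊆ ℝⁿ` (with open manifold
interior), then any two points of `Y` are joined in `Y` by a shortest curve in
the metric `ρ_Y`. -/
theorem rhoY_shortest_curve_exists
    (n : ℕ) (hn : 2 ≤ n) (Y : Set (Euc n))
    (hcomp : IsCompact Y) (hconn : IsConnected Y)
    (hman : IsC0ManifoldWithBoundary n (by omega) Y)
    (hopen : IsOpen (mInterior n Y))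
    (hbd : (Y \ mInterior n Y).Nonempty)
    (hfin : ∀ x ∈ Y, ∀ y ∈ Y, rhoY n Y x y < ⊤)
    (heq : ∀ x ∈ Y, ∀ y ∈ Y, (rhoY n Y x y = 0 ↔ x = y))
    (hsymm : ∀ x ∈ Y, ∀ y ∈ Y, rhoY n Y x y = rhoY n Y y x)
    (htri : ∀ x ∈ Y, ∀ y ∈ Y, ∀ z ∈ Y, rhoY n Y x z ≤ rhoY n Y x y + rhoY n Y y z) :
    ∀ x ∈ Y, ∀ y ∈ Y, ∃ (L : ℝ) (γ : ℝ → Euc n), 0 ≤ L ∧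
      ENNReal.ofReal L = rhoY n Y x y ∧
      ContinuousOn γ (Icc (0:ℝ) L) ∧ MapsTo γ (Icc (0:ℝ) L) Y ∧
      γ 0 = x ∧ γ L = y ∧
      ∀ s ∈ Icc (0:ℝ) L, ∀ t ∈ Icc (0:ℝ) L, s < t →
        rhoY n Y (γ s) (γ t) = ENNReal.ofReal (t - s) := by
  intro x hx y hy
  by_cases hxy : x = y
  · subst hxy
    refine ⟨0, fun _ => x, le_rfl, ?_, continuousOn_const, fun t _ => hx, rfl, rfl, ?_⟩
    · rw [ENNReal.ofReal_zero, (heq x hx x hx).2 rfl]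
    · intro s hs t ht hst
      exfalso
      have h1 : s = 0 := le_antisymm hs.2 hs.1
      have h2 : t = 0 := le_antisymm ht.2 ht.1
      rw [h1, h2] at hst; exact lt_irrefl 0 hst
  · have hfinxy := hfin x hx y hy
    set L := (rhoY n Y x y).toReal with hLdef
    have hrho : ENNReal.ofReal L = rhoY n Y x y := ENNReal.ofReal_toReal hfinxy.ne
    have hL0 : 0 < L :=
      ENNReal.toReal_pos (fun h0 => hxy ((heq x hx y hy).1 h0)) hfinxy.ne
    have hex : ∀ k : ℕ, ∃ f : ℝ → Euc n, (∀ t, f t ∈ mInterior n Y) ∧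
        dist (f 0) x < 1 / ((k : ℝ) + 1) ∧ dist (f L) y < 1 / ((k : ℝ) + 1) ∧
        (∀ s t : ℝ, s ≤ t → dist (f s) (f t) ≤ ((L + 1 / ((k : ℝ) + 1)) / L) * (t - s)) :=
      fun k => exists_path hopen hL0 hrho.symm k
    choose F hFmem hF0 hFL hFlip using hex
    set U : Ultrafilter ℕ := Ultrafilter.of atTop with hUdef
    have hUle : (U : Filter ℕ) ≤ atTop := Ultrafilter.of_le _
    have hIntY : mInterior n Y ⊆ Y := fun z hz => hz.1
    have hYc : IsClosed Y := hcomp.isClosed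
    have hclY : closure (mInterior n Y) ⊆ Y := closure_minimal hIntY hYc
    have hKc : IsCompact (closure (mInterior n Y)) :=
      hcomp.of_isClosed_subset isClosed_closure hclY
    have hlim : ∀ t : ℝ, ∃ z ∈ closure (mInterior n Y),
        Tendsto (fun k => F k t) (U : Filter ℕ) (nhds z) := by
      intro t
      obtain ⟨z, hz, hle⟩ := hKc.ultrafilter_le_nhds (U.map fun k => F k t) (by
        rw [Ultrafilter.coe_map, le_principal_iff, Filter.mem_map]
        exact Filter.univ_mem' fun k => subset_closure (hFmem k t))
      exact ⟨z, hz, by rwa [Ultrafilter.coe_map] at hle⟩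
    choose γ hγK hγt using hlim
    have htend0 : Tendsto (fun k => F k 0) atTop (nhds x) := by
      rw [tendsto_iff_dist_tendsto_zero]
      exact squeeze_zero (fun k => dist_nonneg) (fun k => (hF0 k).le)
        tendsto_one_div_add_atTop_nhds_zero_nat
    have htendL : Tendsto (fun k => F k L) atTop (nhds y) := by
      rw [tendsto_iff_dist_tendsto_zero]
      exact squeeze_zero (fun k => dist_nonneg) (fun k => (hFL k).le)
        tendsto_one_div_add_atTop_nhds_zero_nat
    have hγ0 : γ 0 = x := tendsto_nhds_unique (hγt 0) (htend0.mono_left hUle)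
    have hγL : γ L = y := tendsto_nhds_unique (hγt L) (htendL.mono_left hUle)
    have hγlip : ∀ s t : ℝ, s ≤ t → dist (γ s) (γ t) ≤ ((L + 1) / L) * (t - s) := by
      intro s t hst
      refine le_of_tendsto ((hγt s).dist (hγt t))
        ((Filter.Eventually.of_forall fun k => ?_).filter_mono hUle)
      calc dist (F k s) (F k t) ≤ ((L + 1 / ((k : ℝ) + 1)) / L) * (t - s) := hFlip k s t hst
        _ ≤ ((L + 1) / L) * (t - s) := by
            have h1 : 1 / ((k : ℝ) + 1) ≤ 1 := by
              rw [div_le_one (by positivity)]; simp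
            have h2 : 0 ≤ t - s := by linarith
            gcongr
    have hγcont : Continuous γ := by
      have hC : 0 ≤ (L + 1) / L := by positivity
      exact (lip_of_dist hC hγlip).continuous
    have hγY : ∀ t, γ t ∈ Y := fun t => hclY (hγK t)
    have hFcont : ∀ k, Continuous (F k) := fun k =>
      (lip_of_dist (by positivity) (hFlip k)).continuous
    have hkey : ∀ s t : ℝ, 0 ≤ s → s ≤ t → t ≤ L →
        rhoY n Y (γ s) (γ t) ≤ ENNReal.ofReal (t - s) := by
      intro s t hs hst htL
      refine ENNReal.le_of_forall_pos_le_add fun ε hε _ => ?_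
      have hεR : (0 : ℝ) < ε := hε
      obtain ⟨N, hN⟩ := exists_nat_one_div_lt hεR
      have hev : ∀ᶠ k in atTop,
          intrinsicDist (mInterior n Y) (F k s) (F k t) ≤ ENNReal.ofReal (t - s) + ε := by
        filter_upwards [Filter.eventually_ge_atTop N] with k hk
        set Ck : ℝ := (L + 1 / ((k : ℝ) + 1)) / L with hCk
        have hCk0 : 0 ≤ Ck := by rw [hCk]; positivity
        have h1 : intrinsicDist (mInterior n Y) (F k s) (F k t) ≤
            ENNReal.ofReal (Ck * (t - s)) := by
          refine le_trans (intrinsic_le (g := fun u => F k (s + u * (t - s)))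
            ?_ ?_ ?_ ?_) ?_
          · exact ((hFcont k).comp (by continuity)).continuousOn
          · beta_reduce; rw [show s + 0 * (t - s) = s by ring]
          · beta_reduce; rw [show s + 1 * (t - s) = t by ring]
          · intro u _; exact hFmem k _
          · refine evar_le_of_dist (mul_nonneg hCk0 (by linarith)) ?_
            intro a b _ _ hab
            calc dist (F k (s + a * (t - s))) (F k (s + b * (t - s)))
                ≤ Ck * ((s + b * (t - s)) - (s + a * (t - s))) :=
                  hFlip k _ _ (by nlinarith)
              _ = (Ck * (t - s)) * (b - a) := by ring
        refine h1.trans ?_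
        have h2 : Ck * (t - s) ≤ (t - s) + 1 / ((N : ℝ) + 1) := by
          have e1 : Ck * (t - s) = (t - s) + (1 / ((k : ℝ) + 1)) * ((t - s) / L) := by
            rw [hCk]; field_simp
          have e2 : (t - s) / L ≤ 1 := by
            rw [div_le_one hL0]; linarith
          have e3 : (1 / ((k : ℝ) + 1)) * ((t - s) / L) ≤ 1 / ((k : ℝ) + 1) :=
            mul_le_of_le_one_right (by positivity) e2
          have e4 : 1 / ((k : ℝ) + 1) ≤ 1 / ((N : ℝ) + 1) := by
            have e5 : (N : ℝ) + 1 ≤ (k : ℝ) + 1 := by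
              have : (N : ℝ) ≤ (k : ℝ) := Nat.cast_le.2 hk
              linarith
            exact one_div_le_one_div_of_le (by positivity) e5
          linarith
        calc ENNReal.ofReal (Ck * (t - s)) ≤ ENNReal.ofReal ((t - s) + 1 / ((N : ℝ) + 1)) :=
              ENNReal.ofReal_le_ofReal h2
          _ = ENNReal.ofReal (t - s) + ENNReal.ofReal (1 / ((N : ℝ) + 1)) :=
              ENNReal.ofReal_add (by linarith) (by positivity)
          _ ≤ ENNReal.ofReal (t - s) + ε := by
              refine add_le_add_right ?_ _
              rw [← ENNReal.ofReal_coe_nnreal]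
              exact ENNReal.ofReal_le_ofReal hN.le
      exact rhoY_le_of_tendsto (fun k => hFmem k s) (fun k => hFmem k t)
        (hγt s) (hγt t) (hev.filter_mono hUle)
    refine ⟨L, γ, hL0.le, hrho, hγcont.continuousOn, fun t _ => hγY t, hγ0, hγL, ?_⟩
    intro s hs t ht hst
    obtain ⟨hs1, hs2⟩ := hs
    obtain ⟨ht1, ht2⟩ := ht
    have hb := hkey s t hs1 hst.le ht2
    have ha : rhoY n Y x (γ s) ≤ ENNReal.ofReal s := by
      have := hkey 0 s le_rfl hs1 hs2
      rwa [hγ0, sub_zero] at this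
    have hc : rhoY n Y (γ t) y ≤ ENNReal.ofReal (L - t) := by
      have := hkey t L ht1 ht2 le_rfl
      rwa [hγL] at this
    refine le_antisymm hb ?_
    have h1 : rhoY n Y x y ≤ rhoY n Y x (γ s) +
        (rhoY n Y (γ s) (γ t) + rhoY n Y (γ t) y) := by
      calc rhoY n Y x y ≤ rhoY n Y x (γ s) + rhoY n Y (γ s) y :=
            htri x hx (γ s) (hγY s) y hy
        _ ≤ rhoY n Y x (γ s) + (rhoY n Y (γ s) (γ t) + rhoY n Y (γ t) y) :=
            add_le_add_right (htri (γ s) (hγY s) (γ t) (hγY t) y hy) _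
    have h2 : ENNReal.ofReal L ≤ rhoY n Y (γ s) (γ t) +
        (ENNReal.ofReal s + ENNReal.ofReal (L - t)) := by
      calc ENNReal.ofReal L = rhoY n Y x y := hrho
        _ ≤ rhoY n Y x (γ s) + (rhoY n Y (γ s) (γ t) + rhoY n Y (γ t) y) := h1
        _ ≤ ENNReal.ofReal s + (rhoY n Y (γ s) (γ t) + ENNReal.ofReal (L - t)) :=
            add_le_add ha (add_le_add_right hc _)
        _ = rhoY n Y (γ s) (γ t) + (ENNReal.ofReal s + ENNReal.ofReal (L - t)) := by
            ring
    have hsum : ENNReal.ofReal L = ENNReal.ofReal (t - s) +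
        (ENNReal.ofReal s + ENNReal.ofReal (L - t)) := by
      rw [← ENNReal.ofReal_add (by linarith : (0:ℝ) ≤ s) (by linarith : (0:ℝ) ≤ L - t),
        ← ENNReal.ofReal_add (by linarith : (0:ℝ) ≤ t - s) (by linarith : (0:ℝ) ≤ s + (L - t))]
      congr 1
      ring
    rw [hsum] at h2
    have hfinX : ENNReal.ofReal s + ENNReal.ofReal (L - t) ≠ ⊤ := by
      exact ENNReal.add_ne_top.2 ⟨ENNReal.ofReal_ne_top, ENNReal.ofReal_ne_top⟩
    exact (ENNReal.add_le_add_iff_right hfinX).1 h2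
end
end
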